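/- Let b_4 : ℕ → {0,1,2,3} be the fixed point starting with 0 of the morphism 0 ↦ 01, 1 ↦ 21, 2 ↦ 03, 3 ↦ 23, and let g_6 be the 5-uniform morphism from {0,1,2,3}* to {0,1,2,3,4,5}* defined by g_6(0) = 01230, g_6(1) = 24134, g_6(2) = 52340, g_6(3) = 24513. Then the infinite word g_6(b_4) over 6 letters avoids every conjugacy class of length at least 2: there is no finite word u with |u| ≥ 2 such that every cyclic conjugate of u is a factor of g_6(b_4). -/
import Mathlib


/-- `u` is a factor of the infinite word `x`. -/
def IsFactorOfInf {α : Type*} (u : List α) (x : ℕ → α) : Prop :=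
  ∃ i : ℕ, u = (List.range u.length).map fun j => x (i + j)

/-- The morphism `0 ↦ 01, 1 ↦ 21, 2 ↦ 03, 3 ↦ 23` whose fixed point
starting with `0` is `b₄`. -/
def mb4 : Fin 4 → List (Fin 4) := ![[0, 1], [2, 1], [0, 3], [2, 3]]

/-- The 5-uniform morphism `g₆ : {0,1,2,3}* → {0,1,2,3,4,5}*`. -/
def g6 : Fin 4 → List (Fin 6) :=
  ![[0, 1, 2, 3, 0], [2, 4, 1, 3, 4], [5, 2, 3, 4, 0], [2, 4, 5, 1, 3]]

/-! ### Finite data -/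

def caA1 : Fin 4 → Fin 4 := ![0, 2, 0, 2]
def caA2 : Fin 4 → Fin 4 := ![1, 1, 3, 3]
def caPE : Fin 4 → Bool := ![true, false, true, false]
def caP8 (a b : Fin 4) : Prop :=
  (a, b) ∈ [((0:Fin 4),(1:Fin 4)), (0,3), (1,0), (1,2), (2,1), (2,3), (3,0), (3,2)]
instance (a b : Fin 4) : Decidable (caP8 a b) := by unfold caP8; infer_instance

lemma ca_mbA : ∀ a, mb4 a = [caA1 a, caA2 a] := by decide
lemma ca_peA1 : ∀ a, caPE (caA1 a) = true := by decide
lemma ca_peA2 : ∀ a, caPE (caA2 a) = false := by decide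
lemma ca_P8_blk : ∀ a, caP8 (caA1 a) (caA2 a) := by decide
lemma ca_P8_cross : ∀ a b, caP8 (caA2 a) (caA1 b) := by decide
lemma ca_mbinj : ∀ a b : Fin 4, caA1 a = caA1 b → caA2 a = caA2 b → a = b := by decide
lemma ca_a2a2 : ∀ a, caA2 (caA2 a) = caA2 a := by decide
lemma ca_a2even : ∀ a b : Fin 4, caPE a = true → caPE b = true → caA2 a = caA2 b → a = b := by
  decide
lemma ca_pairA1 : ∀ a b : Fin 4, caP8 a b → caA1 a ≠ caA1 b := by decide
lemma ca_g6pref3 : ∀ a b : Fin 4, (g6 a).getD 0 0 = (g6 b).getD 0 0 →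
    (g6 a).getD 1 0 = (g6 b).getD 1 0 → (g6 a).getD 2 0 = (g6 b).getD 2 0 → a = b := by decide
lemma ca_g6suf2 : ∀ a b : Fin 4, (g6 a).getD 3 0 = (g6 b).getD 3 0 →
    (g6 a).getD 4 0 = (g6 b).getD 4 0 → a = b := by decide
lemma ca_g6len : ∀ a, (g6 a).length = 5 := by decide

/-! ### Arithmetic helpers -/

lemma ca_addmod (s j M : ℕ) : (s + j) % M = (s % M + j) % M := by
  rw [Nat.add_mod s j M, Nat.add_mod (s % M) j M, Nat.mod_mod_of_dvd s (dvd_refl M)]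

lemma ca_modl (A l m : ℕ) (hm : 0 < m) (hl : l < 5) :
    (5*A + l) % (5*m) = 5*(A % m) + l := by
  have h := Nat.div_add_mod A m
  have hlt : A % m < m := Nat.mod_lt _ hm
  have e : 5*A + l = (5*(A % m) + l) + (5*m)*(A/m) := by
    calc 5*A + l = 5*(m*(A/m) + A % m) + l := by rw [h]
    _ = (5*(A % m) + l) + (5*m)*(A/m) := by ring
  rw [e, Nat.add_mul_mod_self_left, Nat.mod_eq_of_lt (by omega)]

/-! ### Window data for the 6-letter word -/

abbrev caT4 := Fin 6 × Fin 6 × Fin 6 × Fin 6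
def caW (a b c : Fin 4) : List (Fin 6) := g6 a ++ g6 b ++ g6 c
def caw4 (i : ℕ) (a b c : Fin 4) : caT4 :=
  ((caW a b c).getD i 0, (caW a b c).getD (i+1) 0,
   (caW a b c).getD (i+2) 0, (caW a b c).getD (i+3) 0)

def caTrips : List (Fin 4 × Fin 4 × Fin 4) :=
  [(0,1,0),(0,1,2),(0,3,0),(0,3,2),(1,0,1),(1,0,3),(1,2,1),(1,2,3),
   (2,1,0),(2,1,2),(2,3,0),(2,3,2),(3,0,1),(3,0,3),(3,2,1),(3,2,3)]

def caWins : List (ℕ × caT4) :=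
  [(0, (0, 1, 2, 3)),
   (4, (0, 2, 4, 1)),
   (4, (0, 2, 4, 5)),
   (1, (1, 2, 3, 0)),
   (3, (1, 3, 0, 1)),
   (2, (1, 3, 4, 0)),
   (2, (1, 3, 4, 5)),
   (3, (1, 3, 5, 2)),
   (2, (2, 3, 0, 2)),
   (1, (2, 3, 4, 0)),
   (0, (2, 4, 1, 3)),
   (0, (2, 4, 5, 1)),
   (4, (3, 0, 1, 2)),
   (3, (3, 0, 2, 4)),
   (3, (3, 4, 0, 1)),
   (2, (3, 4, 0, 2)),
   (3, (3, 4, 5, 2)),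
   (4, (3, 5, 2, 3)),
   (4, (4, 0, 1, 2)),
   (3, (4, 0, 2, 4)),
   (1, (4, 1, 3, 4)),
   (1, (4, 5, 1, 3)),
   (4, (4, 5, 2, 3)),
   (2, (5, 1, 3, 0)),
   (2, (5, 1, 3, 5)),
   (0, (5, 2, 3, 4))]

def caPhase (t : caT4) : ℕ := (((caWins.find? (fun p => p.2 == t)).map (fun p => p.1)).getD 0)

lemma ca_tripmem : ∀ a b c : Fin 4, caP8 a b → caP8 b c → (a,b,c) ∈ caTrips := by decide
set_option maxRecDepth 100000 in
lemma ca_phase : ∀ (i : Fin 5), ∀ t ∈ caTrips, caPhase (caw4 i t.1 t.2.1 t.2.2) = (i : ℕ) := by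
  decide

def caW2 : List (Fin 6 × Fin 6) := [(0, 1), (0, 2), (1, 2), (1, 3), (2, 3), (2, 4), (3, 0), (3, 4), (3, 5), (4, 0), (4, 1), (4, 5), (5, 1), (5, 2)]
def caW3 : List (Fin 6 × Fin 6 × Fin 6) := [(0, 1, 2), (0, 2, 4), (1, 2, 3), (1, 3, 0), (1, 3, 4), (1, 3, 5), (2, 3, 0), (2, 3, 4), (2, 4, 1), (2, 4, 5), (3, 0, 1), (3, 0, 2), (3, 4, 0), (3, 4, 5), (3, 5, 2), (4, 0, 1), (4, 0, 2), (4, 1, 3), (4, 5, 1), (4, 5, 2), (5, 1, 3), (5, 2, 3)]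
def caW4 : List caT4 := [(0, 1, 2, 3), (0, 2, 4, 1), (0, 2, 4, 5), (1, 2, 3, 0), (1, 3, 0, 1), (1, 3, 4, 0), (1, 3, 4, 5), (1, 3, 5, 2), (2, 3, 0, 2), (2, 3, 4, 0), (2, 4, 1, 3), (2, 4, 5, 1), (3, 0, 1, 2), (3, 0, 2, 4), (3, 4, 0, 1), (3, 4, 0, 2), (3, 4, 5, 2), (3, 5, 2, 3), (4, 0, 1, 2), (4, 0, 2, 4), (4, 1, 3, 4), (4, 5, 1, 3), (4, 5, 2, 3), (5, 1, 3, 0), (5, 1, 3, 5), (5, 2, 3, 4)]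

lemma ca_mem2 : ∀ (i : Fin 5), ∀ t ∈ caTrips,
    ((caW t.1 t.2.1 t.2.2).getD i 0, (caW t.1 t.2.1 t.2.2).getD (i+1) 0) ∈ caW2 := by decide
set_option maxRecDepth 100000 in
lemma ca_mem3 : ∀ (i : Fin 5), ∀ t ∈ caTrips,
    ((caW t.1 t.2.1 t.2.2).getD i 0, (caW t.1 t.2.1 t.2.2).getD (i+1) 0,
     (caW t.1 t.2.1 t.2.2).getD (i+2) 0) ∈ caW3 := by decide
set_option maxRecDepth 100000 in
lemma ca_mem4 : ∀ (i : Fin 5), ∀ t ∈ caTrips, caw4 i t.1 t.2.1 t.2.2 ∈ caW4 := by decide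
lemma ca_kill2 : ∀ a b : Fin 6, (a, b) ∈ caW2 → (b, a) ∈ caW2 → False := by decide
set_option maxHeartbeats 2000000 in
set_option synthInstance.maxSize 2000 in
lemma ca_kill3 : ∀ a b c : Fin 6, (a,b,c) ∈ caW3 → (b,c,a) ∈ caW3 → (c,a,b) ∈ caW3 → False := by
  decide
set_option maxRecDepth 100000 in
set_option maxHeartbeats 4000000 in
set_option synthInstance.maxSize 2000 in
lemma ca_kill4 : ∀ a b c d : Fin 6, (a,b,c,d) ∈ caW4 → (b,c,d,a) ∈ caW4 →
    (c,d,a,b) ∈ caW4 → (d,a,b,c) ∈ caW4 → False := by decide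

/-! ### Basic properties of the fixed point `b4` -/

set_option linter.unusedSectionVars false

section B4
variable {b4 : ℕ → Fin 4} (hfix : ∀ n, [b4 (2 * n), b4 (2 * n + 1)] = mb4 (b4 n))

def caX (b4 : ℕ → Fin 4) : ℕ → Fin 6 := fun n => (g6 (b4 (n / 5))).getD (n % 5) 0

include hfix

lemma ca_b4E : ∀ t, b4 (2*t) = caA1 (b4 t) := by
  intro t
  have h := hfix t
  rw [ca_mbA] at h
  exact (List.cons.injEq _ _ _ _).mp h |>.1

lemma ca_b4O : ∀ t, b4 (2*t+1) = caA2 (b4 t) := by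
  intro t
  have h := hfix t
  rw [ca_mbA] at h
  have := (List.cons.injEq _ _ _ _).mp h |>.2
  exact (List.cons.injEq _ _ _ _).mp this |>.1

lemma ca_pb : ∀ k, caPE (b4 k) = decide (k % 2 = 0) := by
  intro k
  rcases Nat.even_or_odd k with ⟨t, ht⟩ | ⟨t, ht⟩
  · have hk : k = 2*t := by omega
    subst hk
    rw [ca_b4E hfix, ca_peA1]
    have : 2*t % 2 = 0 := by omega
    simp [this]
  · subst ht
    rw [ca_b4O hfix, ca_peA2]
    have : (2*t+1) % 2 = 1 := by omega
    simp [this]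

lemma ca_pairb : ∀ k, caP8 (b4 k) (b4 (k+1)) := by
  intro k
  rcases Nat.even_or_odd k with ⟨t, ht⟩ | ⟨t, ht⟩
  · have hk : k = 2*t := by omega
    subst hk
    rw [ca_b4E hfix, ca_b4O hfix]
    exact ca_P8_blk _
  · subst ht
    have h1 : b4 (2*t+1) = caA2 (b4 t) := ca_b4O hfix t
    have h2 : b4 (2*t+1+1) = caA1 (b4 (t+1)) := by
      have : 2*t+1+1 = 2*(t+1) := by omega
      rw [this, ca_b4E hfix]
    rw [h1, h2]
    exact ca_P8_cross _ _

lemma ca_Xval : ∀ t l, l < 5 → caX b4 (5*t + l) = (g6 (b4 t)).getD l 0 := by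
  intro t l hl
  have h1 : (5*t+l)/5 = t := by omega
  have h2 : (5*t+l)%5 = l := by omega
  simp only [caX, h1, h2]

lemma ca_Xcat : ∀ t s, s < 15 →
    caX b4 (5*t + s) = (caW (b4 t) (b4 (t+1)) (b4 (t+2))).getD s 0 := by
  intro t s hs
  unfold caW
  rcases (by omega : s < 5 ∨ (5 ≤ s ∧ s < 10) ∨ (10 ≤ s ∧ s < 15)) with h | h | h
  · rw [List.getD_append _ _ _ _ (by rw [List.length_append, ca_g6len, ca_g6len]; omega)]
    rw [List.getD_append _ _ _ _ (by rw [ca_g6len]; omega)]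
    exact ca_Xval hfix t s h
  · rw [List.getD_append _ _ _ _ (by rw [List.length_append, ca_g6len, ca_g6len]; omega)]
    rw [List.getD_append_right _ _ _ _ (by rw [ca_g6len]; omega)]
    rw [ca_g6len]
    have e : 5*t + s = 5*(t+1) + (s - 5) := by omega
    rw [e, ca_Xval hfix (t+1) (s-5) (by omega)]
  · rw [List.getD_append_right _ _ _ _
      (by rw [List.length_append, ca_g6len, ca_g6len]; omega)]
    rw [List.length_append, ca_g6len, ca_g6len]
    have e : 5*t + s = 5*(t+2) + (s - 10) := by omega
    rw [e, ca_Xval hfix (t+2) (s-10) (by omega)]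

lemma ca_Xwin : ∀ p j, j < 11 →
    caX b4 (p + j) = (caW (b4 (p/5)) (b4 (p/5+1)) (b4 (p/5+2))).getD (p%5 + j) 0 := by
  intro p j hj
  have e : p + j = 5*(p/5) + (p%5 + j) := by omega
  rw [e, ca_Xcat hfix (p/5) (p%5+j) (by omega)]

end B4

section Sync
variable {b4 : ℕ → Fin 4} (hfix : ∀ n, [b4 (2 * n), b4 (2 * n + 1)] = mb4 (b4 n))
include hfix

lemma ca_xtup : ∀ p, caw4 (p%5) (b4 (p/5)) (b4 (p/5+1)) (b4 (p/5+2)) =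
    (caX b4 p, caX b4 (p+1), caX b4 (p+2), caX b4 (p+3)) := by
  intro p
  have h0 := ca_Xwin hfix p 0 (by omega)
  have h1 := ca_Xwin hfix p 1 (by omega)
  have h2 := ca_Xwin hfix p 2 (by omega)
  have h3 := ca_Xwin hfix p 3 (by omega)
  simp only [Nat.add_zero] at h0
  unfold caw4
  rw [← h0, ← h1, ← h2, ← h3]

lemma ca_sync : ∀ p q, (∀ j, j < 4 → caX b4 (p+j) = caX b4 (q+j)) → p % 5 = q % 5 := by
  intro p q h
  have hp : caPhase (caw4 (p%5) (b4 (p/5)) (b4 (p/5+1)) (b4 (p/5+2))) = p % 5 :=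
    ca_phase ⟨p%5, by omega⟩ (b4 (p/5), b4 (p/5+1), b4 (p/5+2))
      (ca_tripmem _ _ _ (ca_pairb hfix (p/5)) (ca_pairb hfix (p/5+1)))
  have hq : caPhase (caw4 (q%5) (b4 (q/5)) (b4 (q/5+1)) (b4 (q/5+2))) = q % 5 :=
    ca_phase ⟨q%5, by omega⟩ (b4 (q/5), b4 (q/5+1), b4 (q/5+2))
      (ca_tripmem _ _ _ (ca_pairb hfix (q/5)) (ca_pairb hfix (q/5+1)))
  have htup : (caX b4 p, caX b4 (p+1), caX b4 (p+2), caX b4 (p+3)) =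
      (caX b4 q, caX b4 (q+1), caX b4 (q+2), caX b4 (q+3)) := by
    have e0 := h 0 (by omega); have e1 := h 1 (by omega)
    have e2 := h 2 (by omega); have e3 := h 3 (by omega)
    simp only [Nat.add_zero] at e0
    rw [e0, e1, e2, e3]
  rw [← hp, ← hq, ca_xtup hfix, ca_xtup hfix, htup]

lemma ca_xmem2 : ∀ p, (caX b4 p, caX b4 (p+1)) ∈ caW2 := by
  intro p
  have h0 := ca_Xwin hfix p 0 (by omega)
  have h1 := ca_Xwin hfix p 1 (by omega)
  simp only [Nat.add_zero] at h0
  rw [h0, h1]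
  exact ca_mem2 ⟨p%5, by omega⟩ (b4 (p/5), b4 (p/5+1), b4 (p/5+2))
    (ca_tripmem _ _ _ (ca_pairb hfix (p/5)) (ca_pairb hfix (p/5+1)))

lemma ca_xmem3 : ∀ p, (caX b4 p, caX b4 (p+1), caX b4 (p+2)) ∈ caW3 := by
  intro p
  have h0 := ca_Xwin hfix p 0 (by omega)
  have h1 := ca_Xwin hfix p 1 (by omega)
  have h2 := ca_Xwin hfix p 2 (by omega)
  simp only [Nat.add_zero] at h0
  rw [h0, h1, h2]
  exact ca_mem3 ⟨p%5, by omega⟩ (b4 (p/5), b4 (p/5+1), b4 (p/5+2))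
    (ca_tripmem _ _ _ (ca_pairb hfix (p/5)) (ca_pairb hfix (p/5+1)))

lemma ca_xmem4 : ∀ p, (caX b4 p, caX b4 (p+1), caX b4 (p+2), caX b4 (p+3)) ∈ caW4 := by
  intro p
  rw [← ca_xtup hfix]
  exact ca_mem4 ⟨p%5, by omega⟩ (b4 (p/5), b4 (p/5+1), b4 (p/5+2))
    (ca_tripmem _ _ _ (ca_pairb hfix (p/5)) (ca_pairb hfix (p/5+1)))

end Sync

/-! ### The 4-letter level: no periodic word has all its `(m+1)`-windows in `b4`,
in the strengthened form needed for the induction. -/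

section Gstar
variable {b4 : ℕ → Fin 4} (hfix : ∀ n, [b4 (2 * n), b4 (2 * n + 1)] = mb4 (b4 n))
include hfix

lemma ca_Gstar : ∀ m, 2 ≤ m → ∀ V : ℕ → Fin 4,
    (∀ s, V (s + m) = V s) →
    (∀ s, ∃ k, ∀ j < m, V (s + j) = b4 (k + j)) →
    (∀ s, ∃ k, caA2 (b4 k) = caA2 (V (s + (m-1))) ∧ ∀ j < m, V (s + j) = b4 (k + 1 + j)) →
    False := by
  intro m
  induction m using Nat.strong_induction_on with
  | _ m IH =>
  intro hm2 V hper hconj hB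
  -- adjacent letters of V alternate parity class
  have hflip : ∀ z, caPE (V (z+1)) = !caPE (V z) := by
    intro z
    obtain ⟨k, hk⟩ := hconj z
    have e0 : V z = b4 k := by simpa using hk 0 (by omega)
    have e1 : V (z+1) = b4 (k+1) := by simpa using hk 1 (by omega)
    rw [e0, e1, ca_pb hfix, ca_pb hfix]
    rcases Nat.even_or_odd k with h | h
    · have h2 : k % 2 = 0 := Nat.even_iff.mp h
      have h3 : (k+1) % 2 = 1 := by omega
      simp [h2, h3]
    · have h2 : k % 2 = 1 := Nat.odd_iff.mp h
      have h3 : (k+1) % 2 = 0 := by omega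
      simp [h2, h3]
  have hflip2 : ∀ z d, caPE (V (z + 2*d)) = caPE (V z) := by
    intro z d
    induction d with
    | zero => simp
    | succ d ih =>
      have e : z + 2*(d+1) = (z + 2*d + 1) + 1 := by omega
      rw [e, hflip, hflip, Bool.not_not, ih]
  -- m must be even
  rcases Nat.even_or_odd m with ⟨m', hm'⟩ | ⟨d, hd⟩
  swap
  · -- odd m : contradiction
    exfalso
    have h1 : caPE (V (1 + 2*d)) = caPE (V 1) := hflip2 1 d
    have h2 : V (1 + 2*d) = V (0 + m) := by rw [hd]; ring_nf
    have h3 : V (0 + m) = V 0 := hper 0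
    rw [h2, h3] at h1
    have h4 : caPE (V 1) = !caPE (V 0) := hflip 0
    rw [h4] at h1
    simp at h1
  · -- even m = 2*m'
    have hm : m = 2*m' := by omega
    have hm'1 : 1 ≤ m' := by omega
    -- a starting point with even parity class
    obtain ⟨sstar, hs⟩ : ∃ s, caPE (V s) = true := by
      cases h : caPE (V 0) with
      | true => exact ⟨0, h⟩
      | false =>
        refine ⟨1, ?_⟩
        rw [hflip 0, h]; rfl
    have hps : ∀ i, caPE (V (sstar + 2*i)) = true := fun i => (hflip2 sstar i).trans hs
    have VperK : ∀ z t, V (z + m*t) = V z := by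
      intro z t
      induction t with
      | zero => simp
      | succ t ih =>
        have e : z + m*(t+1) = (z + m*t) + m := by ring
        rw [e, hper, ih]
    have hVtrans : ∀ z i, V (z + 2*(i % m')) = V (z + 2*i) := by
      intro z i
      have h := Nat.div_add_mod i m'
      have e : z + 2*i = (z + 2*(i % m')) + m * (i / m') := by
        calc z + 2*i = z + 2*(m' * (i/m') + i % m') := by rw [h]
        _ = (z + 2*(i % m')) + (2*m') * (i/m') := by ring
        _ = (z + 2*(i % m')) + m * (i/m') := by rw [hm]
      rw [e, VperK]
    -- decode blocks
    have hblk : ∀ i, ∃ t, V (sstar + 2*i) = b4 (2*t) ∧ V (sstar + 2*i + 1) = b4 (2*t+1) := by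
      intro i
      obtain ⟨k, hk⟩ := hconj (sstar + 2*i)
      have e0 : V (sstar + 2*i) = b4 k := by simpa using hk 0 (by omega)
      have e1 : V (sstar + 2*i + 1) = b4 (k+1) := by simpa using hk 1 (by omega)
      have hpe : caPE (b4 k) = true := by rw [← e0]; exact hps i
      rw [ca_pb hfix] at hpe
      have hk2 : k % 2 = 0 := by simpa using hpe
      refine ⟨k/2, ?_, ?_⟩
      · rw [show 2*(k/2) = k by omega]; exact e0
      · rw [show 2*(k/2)+1 = k+1 by omega]; exact e1
    set T : ℕ → ℕ := fun i => (hblk (i % m')).choose with hTdef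
    have hW1 : ∀ i, V (sstar + 2*i) = b4 (2 * T i) ∧ V (sstar + 2*i + 1) = b4 (2*T i+1) := by
      intro i
      have h := (hblk (i % m')).choose_spec
      constructor
      · rw [← hVtrans sstar i]; exact h.1
      · rw [show sstar + 2*i + 1 = (sstar + 1) + 2*i by omega, ← hVtrans (sstar+1) i,
          show (sstar + 1) + 2*(i % m') = sstar + 2*(i % m') + 1 by omega]
        exact h.2
    have hTmod : ∀ a b, a % m' = b % m' → T a = T b := by
      intro a b h
      simp only [hTdef]
      exact congrArg (fun r => (hblk r).choose) h
    have blockeq : ∀ i t'', V (sstar + 2*i) = b4 (2*t'') →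
        V (sstar + 2*i + 1) = b4 (2*t''+1) → b4 (T i) = b4 t'' := by
      intro i t'' h1 h2
      have w1 := (hW1 i).1
      have w2 := (hW1 i).2
      have a1 : caA1 (b4 (T i)) = caA1 (b4 t'') := by
        rw [← ca_b4E hfix, ← ca_b4E hfix, ← w1, ← h1]
      have a2 : caA2 (b4 (T i)) = caA2 (b4 t'') := by
        rw [← ca_b4O hfix, ← ca_b4O hfix, ← w2, ← h2]
      exact ca_mbinj _ _ a1 a2
    -- base case m' = 1, i.e. m = 2
    rcases (by omega : m' = 1 ∨ 2 ≤ m') with hm'e | hm'2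
    · subst hm'e
      have hmm : m = 2 := by omega
      obtain ⟨k, hk1, hk2⟩ := hB (sstar + 1)
      have e1 : V (sstar + 1) = b4 (k+1) := by simpa using hk2 0 (by omega)
      have e2 : V (sstar + 2) = b4 (k+2) := by
        have := hk2 1 (by omega)
        rw [show sstar + 1 + 1 = sstar + 2 by omega, show k + 1 + 1 = k + 2 by omega] at this
        exact this
      have hVs2 : V (sstar + 2) = V sstar := by
        have := hper sstar
        rw [hmm] at this
        exact this
      have hk1' : caA2 (b4 k) = caA2 (V sstar) := by
        have e : sstar + 1 + (m-1) = sstar + 2 := by omega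
        rw [hk1, e, hVs2]
      have hpek : caPE (b4 (k+2)) = true := by rw [← e2, hVs2]; exact hs
      rw [ca_pb hfix] at hpek
      have hke : k % 2 = 0 := by simpa using hpek
      have hpbk : caPE (b4 k) = true := by
        rw [ca_pb hfix]; simpa using hke
      have hbk : b4 k = V sstar := ca_a2even _ _ hpbk hs hk1'
      have hkk : b4 k = b4 (k+2) := by rw [hbk, ← hVs2, e2]
      have c1 : b4 k = caA1 (b4 (k/2)) := by
        have h := ca_b4E hfix (k/2)
        rw [show 2*(k/2) = k by omega] at h
        exact h
      have c2 : b4 (k+2) = caA1 (b4 (k/2+1)) := by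
        have h := ca_b4E hfix (k/2+1)
        rw [show 2*(k/2+1) = k+2 by omega] at h
        exact h
      exact ca_pairA1 _ _ (ca_pairb hfix (k/2)) (by rw [← c1, ← c2, hkk])
    · -- descent: apply the induction hypothesis at level m'
      refine IH m' (by omega) hm'2 (fun i => b4 (T i)) ?_ ?_ ?_
      · intro s
        exact congrArg b4 (hTmod _ _ (Nat.add_mod_right s m'))
      · -- hconj at level m'
        intro s
        obtain ⟨k, hk⟩ := hconj (sstar + 2*(s % m'))
        have e0 : V (sstar + 2*(s % m')) = b4 k := by simpa using hk 0 (by omega)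
        have hpe : caPE (b4 k) = true := by rw [← e0]; exact hps (s % m')
        rw [ca_pb hfix] at hpe
        have hke : k % 2 = 0 := by simpa using hpe
        refine ⟨k/2, fun j hj => ?_⟩
        have l1 : V (sstar + 2*(s % m' + j)) = b4 (2*(k/2+j)) := by
          have := hk (2*j) (by omega)
          rw [show sstar + 2*(s % m') + 2*j = sstar + 2*(s % m' + j) by ring,
            show k + 2*j = 2*(k/2+j) by omega] at this
          exact this
        have l2 : V (sstar + 2*(s % m' + j) + 1) = b4 (2*(k/2+j)+1) := by
          have := hk (2*j+1) (by omega)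
          rw [show sstar + 2*(s % m') + (2*j+1) = sstar + 2*(s % m' + j) + 1 by ring,
            show k + (2*j+1) = 2*(k/2+j)+1 by omega] at this
          exact this
        have hb := blockeq _ _ l1 l2
        have ht : T (s + j) = T (s % m' + j) :=
          hTmod _ _ (by rw [ca_addmod s j m', ca_addmod (s % m') j m',
            Nat.mod_mod_of_dvd s (dvd_refl m')])
        show b4 (T (s + j)) = b4 (k/2+j)
        rw [ht, hb]
      · -- hB at level m'
        intro s
        obtain ⟨k, hk1, hk2⟩ := hB (sstar + 2*(s % m'))
        have e0 : V (sstar + 2*(s % m')) = b4 (k+1) := by simpa using hk2 0 (by omega)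
        have hpe : caPE (b4 (k+1)) = true := by rw [← e0]; exact hps (s % m')
        rw [ca_pb hfix] at hpe
        have hke : (k+1) % 2 = 0 := by simpa using hpe
        refine ⟨k/2, ?_, ?_⟩
        · -- class condition
          have hidx : sstar + 2*(s % m') + (m-1) = sstar + 2*(s % m' + m' - 1) + 1 := by omega
          rw [hidx] at hk1
          have w2 := (hW1 (s % m' + m' - 1)).2
          rw [w2] at hk1
          have lk : b4 k = caA2 (b4 (k/2)) := by
            have h := ca_b4O hfix (k/2)
            rw [show 2*(k/2)+1 = k by omega] at h
            exact h
          have lt : b4 (2 * T (s % m' + m' - 1) + 1) = caA2 (b4 (T (s % m' + m' - 1))) :=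
            ca_b4O hfix _
          rw [lk, lt, ca_a2a2, ca_a2a2] at hk1
          have ht : T (s % m' + m' - 1) = T (s + (m'-1)) := by
            apply hTmod
            rw [show s % m' + m' - 1 = s % m' + (m'-1) by omega,
              ← ca_addmod s (m'-1) m']
          rw [ht] at hk1
          exact hk1
        · intro j hj
          have l1 : V (sstar + 2*(s % m' + j)) = b4 (2*(k/2+1+j)) := by
            have := hk2 (2*j) (by omega)
            rw [show sstar + 2*(s % m') + 2*j = sstar + 2*(s % m' + j) by ring,
              show k + 1 + 2*j = 2*(k/2+1+j) by omega] at this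
            exact this
          have l2 : V (sstar + 2*(s % m' + j) + 1) = b4 (2*(k/2+1+j)+1) := by
            have := hk2 (2*j+1) (by omega)
            rw [show sstar + 2*(s % m') + (2*j+1) = sstar + 2*(s % m' + j) + 1 by ring,
              show k + 1 + (2*j+1) = 2*(k/2+1+j)+1 by omega] at this
            exact this
          have hb := blockeq _ _ l1 l2
          have ht : T (s + j) = T (s % m' + j) :=
            hTmod _ _ (by rw [ca_addmod s j m', ca_addmod (s % m') j m',
              Nat.mod_mod_of_dvd s (dvd_refl m')])
          show b4 (T (s + j)) = b4 (k/2+1+j)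
          rw [ht, hb]

end Gstar


/-- If `b₄` is the fixed point starting with `0` of the morphism
`0 ↦ 01, 1 ↦ 21, 2 ↦ 03, 3 ↦ 23`, then the infinite word `g₆(b₄)` over six
letters avoids every conjugacy class of length at least `2`: there is no word
`u` with `|u| ≥ 2` all of whose cyclic conjugates are factors of `g₆(b₄)`. -/
theorem stmt_5 (b4 : ℕ → Fin 4) (hb0 : b4 0 = 0)
    (hfix : ∀ n, [b4 (2 * n), b4 (2 * n + 1)] = mb4 (b4 n)) :
    ¬ ∃ u : List (Fin 6), 2 ≤ u.length ∧
        ∀ v w : List (Fin 6), u = w ++ v →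
          IsFactorOfInf (v ++ w) (fun n => (g6 (b4 (n / 5))).getD (n % 5) 0) := by
  rintro ⟨u, hu2, hcon⟩
  set n := u.length with hn
  have hn0 : 0 < n := by omega
  set U : ℕ → Fin 6 := fun z => u.getD (z % n) 0 with hU
  have hUper : ∀ z, U (z + n) = U z := by
    intro z; simp only [hU]; rw [Nat.add_mod_right]
  have hUperK : ∀ z t, U (z + n*t) = U z := by
    intro z t
    induction t with
    | zero => simp
    | succ t ih => rw [show z + n*(t+1) = (z + n*t) + n by ring, hUper, ih]
  have occ : ∀ r, ∃ p, ∀ j, j < n → U (r + j) = caX b4 (p + j) := by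
    intro r
    obtain ⟨i, hi⟩ := hcon (u.drop (r % n)) (u.take (r % n)) (u.take_append_drop (r % n)).symm
    refine ⟨i, fun j hj => ?_⟩
    have hr'n : r % n < n := Nat.mod_lt _ hn0
    have hlen : (u.drop (r % n) ++ u.take (r % n)).length = n := by
      rw [List.length_append, List.length_drop, List.length_take]; omega
    have hi' : (u.drop (r % n) ++ u.take (r % n)) =
        (List.range (u.drop (r % n) ++ u.take (r % n)).length).map fun j => caX b4 (i + j) := hi
    have hpoint : (u.drop (r % n) ++ u.take (r % n)).getD j 0 = caX b4 (i + j) := by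
      conv_lhs => rw [hi']
      rw [List.getD_eq_getElem _ _ (by
        rw [List.length_map, List.length_range, hlen]; exact hj)]
      rw [List.getElem_map]
      rw [List.getElem_range]
    have hrot : U (r + j) = (u.drop (r % n) ++ u.take (r % n)).getD j 0 := by
      have hdl : (u.drop (r % n)).length = n - r % n := by rw [List.length_drop]
      rcases (by omega : j < n - r % n ∨ (n - r % n ≤ j)) with h | h
      · have h1 : (r + j) % n = r % n + j := by
          rw [ca_addmod r j n]
          exact Nat.mod_eq_of_lt (by omega)
        simp only [hU, h1]
        rw [List.getD_eq_getElem u 0 (by omega : r % n + j < u.length)]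
        rw [List.getD_eq_getElem _ 0 (show j < (List.drop (r % n) u ++ List.take (r % n) u).length
          from by rw [hlen]; exact hj)]
        rw [List.getElem_append_left (show j < (List.drop (r % n) u).length
          from by rw [hdl]; omega)]
        rw [List.getElem_drop]
      · have h1 : (r + j) % n = r % n + j - n := by
          rw [ca_addmod r j n]
          rw [Nat.mod_eq_sub_mod (by omega)]
          exact Nat.mod_eq_of_lt (by omega)
        simp only [hU, h1]
        rw [List.getD_eq_getElem u 0 (by omega : r % n + j - n < u.length)]
        rw [List.getD_eq_getElem _ 0 (show j < (List.drop (r % n) u ++ List.take (r % n) u).length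
          from by rw [hlen]; exact hj)]
        rw [List.getElem_append_right (show (List.drop (r % n) u).length ≤ j
          from by rw [hdl]; omega)]
        rw [List.getElem_take]
        congr 1
        rw [hdl]
        omega
    rw [hrot, hpoint]
  choose p hp using occ
  -- small lengths: 2, 3, 4
  rcases (by omega : n = 2 ∨ n = 3 ∨ n = 4 ∨ 5 ≤ n) with h2 | h3 | h4 | h5
  · -- n = 2
    have m0 : (U 0, U 1) ∈ caW2 := by
      have e0 := hp 0 0 (by omega); have e1 := hp 0 1 (by omega)
      simp only [Nat.add_zero, Nat.zero_add] at e0 e1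
      rw [e0, e1]; exact ca_xmem2 hfix (p 0)
    have m1 : (U 1, U 0) ∈ caW2 := by
      have e0 := hp 1 0 (by omega); have e1 := hp 1 1 (by omega)
      simp only [Nat.add_zero] at e0 e1
      have hU2 : U (1 + 1) = U 0 := by
        rw [show 1 + 1 = 0 + n by omega, hUper]
      rw [← hU2, e0, e1]; exact ca_xmem2 hfix (p 1)
    exact ca_kill2 _ _ m0 m1
  · -- n = 3
    have w0 : (U 0, U 1, U 2) ∈ caW3 := by
      have e0 := hp 0 0 (by omega); have e1 := hp 0 1 (by omega)
      have e2 := hp 0 2 (by omega)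
      simp only [Nat.add_zero, Nat.zero_add] at e0 e1 e2
      rw [e0, e1, e2]; exact ca_xmem3 hfix (p 0)
    have w1 : (U 1, U 2, U 0) ∈ caW3 := by
      have e0 := hp 1 0 (by omega); have e1 := hp 1 1 (by omega)
      have e2 := hp 1 2 (by omega)
      simp only [Nat.add_zero] at e0 e1 e2
      have hU3 : U (1 + 2) = U 0 := by rw [show 1 + 2 = 0 + n by omega, hUper]
      rw [← hU3, e0, e1, e2]; exact ca_xmem3 hfix (p 1)
    have w2 : (U 2, U 0, U 1) ∈ caW3 := by
      have e0 := hp 2 0 (by omega); have e1 := hp 2 1 (by omega)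
      have e2 := hp 2 2 (by omega)
      simp only [Nat.add_zero] at e0 e1 e2
      have hU3 : U (2 + 1) = U 0 := by rw [show 2 + 1 = 0 + n by omega, hUper]
      have hU4 : U (2 + 2) = U 1 := by rw [show 2 + 2 = 1 + n by omega, hUper]
      rw [← hU3, ← hU4, e0, e1, e2]; exact ca_xmem3 hfix (p 2)
    exact ca_kill3 _ _ _ w0 w1 w2
  · -- n = 4
    have w0 : (U 0, U 1, U 2, U 3) ∈ caW4 := by
      have e0 := hp 0 0 (by omega); have e1 := hp 0 1 (by omega)
      have e2 := hp 0 2 (by omega); have e3 := hp 0 3 (by omega)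
      simp only [Nat.add_zero, Nat.zero_add] at e0 e1 e2 e3
      rw [e0, e1, e2, e3]; exact ca_xmem4 hfix (p 0)
    have w1 : (U 1, U 2, U 3, U 0) ∈ caW4 := by
      have e0 := hp 1 0 (by omega); have e1 := hp 1 1 (by omega)
      have e2 := hp 1 2 (by omega); have e3 := hp 1 3 (by omega)
      simp only [Nat.add_zero] at e0 e1 e2 e3
      have hx : U (1 + 3) = U 0 := by rw [show 1 + 3 = 0 + n by omega, hUper]
      rw [← hx, e0, e1, e2, e3]; exact ca_xmem4 hfix (p 1)
    have w2 : (U 2, U 3, U 0, U 1) ∈ caW4 := by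
      have e0 := hp 2 0 (by omega); have e1 := hp 2 1 (by omega)
      have e2 := hp 2 2 (by omega); have e3 := hp 2 3 (by omega)
      simp only [Nat.add_zero] at e0 e1 e2 e3
      have hx : U (2 + 2) = U 0 := by rw [show 2 + 2 = 0 + n by omega, hUper]
      have hy : U (2 + 3) = U 1 := by rw [show 2 + 3 = 1 + n by omega, hUper]
      rw [← hx, ← hy, e0, e1, e2, e3]; exact ca_xmem4 hfix (p 2)
    have w3 : (U 3, U 0, U 1, U 2) ∈ caW4 := by
      have e0 := hp 3 0 (by omega); have e1 := hp 3 1 (by omega)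
      have e2 := hp 3 2 (by omega); have e3 := hp 3 3 (by omega)
      simp only [Nat.add_zero] at e0 e1 e2 e3
      have hx : U (3 + 1) = U 0 := by rw [show 3 + 1 = 0 + n by omega, hUper]
      have hy : U (3 + 2) = U 1 := by rw [show 3 + 2 = 1 + n by omega, hUper]
      have hz : U (3 + 3) = U 2 := by rw [show 3 + 3 = 2 + n by omega, hUper]
      rw [← hx, ← hy, ← hz, e0, e1, e2, e3]; exact ca_xmem4 hfix (p 3)
    exact ca_kill4 _ _ _ _ w0 w1 w2 w3
  · -- n ≥ 5 : phase argument
    have hstep : ∀ r, p (r+1) % 5 = (p r + 1) % 5 := by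
      intro r
      apply ca_sync hfix
      intro j hj
      have l1 : caX b4 (p (r+1) + j) = U ((r+1) + j) := (hp (r+1) j (by omega)).symm
      have l2 : caX b4 (p r + 1 + j) = U (r + (1+j)) := by
        rw [show p r + 1 + j = p r + (1+j) by omega]
        exact (hp r (1+j) (by omega)).symm
      rw [l1, l2]
      congr 1
      omega
    have hlin : ∀ r, p r % 5 = (p 0 + r) % 5 := by
      intro r
      induction r with
      | zero => simp
      | succ r ih =>
        have := hstep r
        omega
    have hn5 : n % 5 = 0 := by
      have hsame : p n % 5 = p 0 % 5 := by
        apply ca_sync hfix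
        intro j hj
        have l1 : caX b4 (p n + j) = U (n + j) := (hp n j (by omega)).symm
        have l2 : caX b4 (p 0 + j) = U (0 + j) := (hp 0 j (by omega)).symm
        rw [l1, l2]
        rw [show n + j = (0 + j) + n by omega, hUper]
      have := hlin n
      omega
    set m := n / 5 with hmdef
    have hnm : n = 5*m := by omega
    have hm1 : 1 ≤ m := by omega
    set r0 := (5 - p 0 % 5) % 5 with hr0
    have hq0 : p r0 % 5 = 0 := by
      have := hlin r0
      omega
    set q := p r0 with hqdef
    set t0 := q / 5 with ht0
    have hq5 : q = 5*t0 := by omega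
    set V : ℕ → Fin 4 := fun s => b4 (t0 + s % m) with hV
    have hVper : ∀ s, V (s + m) = V s := by
      intro s; simp only [hV]; rw [Nat.add_mod_right]
    have masterU : ∀ z, U (r0 + z) = caX b4 (q + z % n) := by
      intro z
      have h1 : U (r0 + z) = U (r0 + z % n) := by
        rw [show r0 + z = (r0 + z % n) + n * (z / n) by
          have := Nat.div_add_mod z n; omega]
        exact hUperK _ _
      rw [h1]
      exact hp r0 (z % n) (Nat.mod_lt _ hn0)
    have Phi1core : ∀ s, s < m → ∃ k, ∀ j, j ≤ m → b4 (k + j) = V (s + j) := by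
      intro s hs
      have hp' := hp (r0 + (5*s+3))
      have ph : p (r0 + (5*s+3)) % 5 = 3 := by
        have h1 := hlin (r0 + (5*s+3))
        have h2 := hlin r0
        have h3 := hq0
        omega
      set p' := p (r0 + (5*s+3)) with hp'def
      set k' := p' / 5 with hk'def
      have hp'5 : p' = 5*k' + 3 := by omega
      have E : ∀ z, z < n → caX b4 (p' + z) = caX b4 (q + (5*s+3+z) % n) := by
        intro z hz
        have l1 : caX b4 (p' + z) = U ((r0 + (5*s+3)) + z) := (hp' z hz).symm
        rw [l1, show (r0 + (5*s+3)) + z = r0 + (5*s+3+z) by omega]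
        exact masterU (5*s+3+z)
      refine ⟨k', fun j hj => ?_⟩
      have hVsj : V (s + j) = b4 (t0 + (s + j) % m) := rfl
      rcases (by omega : j = 0 ∨ (1 ≤ j ∧ j < m) ∨ j = m) with hj0 | hjm | hjm
      · -- j = 0 : use the suffix of length 2
        subst hj0
        have E0 := E 0 (by omega)
        have E1 := E 1 (by omega)
        rw [show p' + 0 = 5*k' + 3 by omega] at E0
        rw [show p' + 1 = 5*k' + 4 by omega] at E1
        rw [ca_Xval hfix k' 3 (by omega)] at E0
        rw [ca_Xval hfix k' 4 (by omega)] at E1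
        rw [show (5*s+3+0) % n = 5*s+3 from by
          rw [Nat.add_zero]; exact Nat.mod_eq_of_lt (by omega)] at E0
        rw [show (5*s+3+1) % n = 5*s+4 from by
          rw [show 5*s+3+1 = 5*s+4 by omega]; exact Nat.mod_eq_of_lt (by omega)] at E1
        rw [show q + (5*s+3) = 5*(t0+s) + 3 by omega, ca_Xval hfix (t0+s) 3 (by omega)] at E0
        rw [show q + (5*s+4) = 5*(t0+s) + 4 by omega, ca_Xval hfix (t0+s) 4 (by omega)] at E1
        have := ca_g6suf2 _ _ E0 E1
        rw [hVsj, show (s+0) % m = s from by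
          rw [Nat.add_zero]; exact Nat.mod_eq_of_lt hs, show k' + 0 = k' by omega]
        exact this
      · -- middle blocks
        obtain ⟨hj1, hjlt⟩ := hjm
        have key : ∀ l, l < 3 → (g6 (b4 (k'+j))).getD l 0 =
            (g6 (b4 (t0 + (s+j) % m))).getD l 0 := by
          intro l hl
          have hz : 5*j - 3 + l < n := by omega
          have Ez := E (5*j - 3 + l) hz
          rw [show p' + (5*j - 3 + l) = 5*(k'+j) + l by omega] at Ez
          rw [ca_Xval hfix (k'+j) l (by omega)] at Ez
          rw [show 5*s+3+(5*j-3+l) = 5*(s+j) + l by omega] at Ez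
          rw [hnm, ca_modl (s+j) l m (by omega) (by omega)] at Ez
          rw [show q + (5*((s+j) % m) + l) = 5*(t0 + (s+j) % m) + l by omega] at Ez
          rw [ca_Xval hfix (t0 + (s+j) % m) l (by omega)] at Ez
          exact Ez
        rw [hVsj]
        exact ca_g6pref3 _ _ (key 0 (by omega)) (key 1 (by omega)) (key 2 (by omega))
      · -- j = m : the prefix of length 3
        subst hjm
        have key : ∀ l, l < 3 → (g6 (b4 (k'+m))).getD l 0 =
            (g6 (b4 (t0 + s))).getD l 0 := by
          intro l hl
          have hz : 5*m - 3 + l < n := by omega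
          have Ez := E (5*m - 3 + l) hz
          rw [show p' + (5*m - 3 + l) = 5*(k'+m) + l by omega] at Ez
          rw [ca_Xval hfix (k'+m) l (by omega)] at Ez
          rw [show (5*s+3+(5*m-3+l)) % n = 5*s + l from by
            rw [show 5*s+3+(5*m-3+l) = (5*s+l) + n by omega, Nat.add_mod_right]
            exact Nat.mod_eq_of_lt (by omega)] at Ez
          rw [show q + (5*s + l) = 5*(t0+s) + l by omega] at Ez
          rw [ca_Xval hfix (t0+s) l (by omega)] at Ez
          exact Ez
        rw [hVsj, show (s+m) % m = s from by
          rw [Nat.add_mod_right]; exact Nat.mod_eq_of_lt hs]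
        exact ca_g6pref3 _ _ (key 0 (by omega)) (key 1 (by omega)) (key 2 (by omega))
    have Phi1 : ∀ s, ∃ k, ∀ j, j ≤ m → b4 (k + j) = V (s + j) := by
      intro s
      obtain ⟨k, hk⟩ := Phi1core (s % m) (Nat.mod_lt _ (by omega))
      refine ⟨k, fun j hj => ?_⟩
      rw [hk j hj]
      show b4 (t0 + (s % m + j) % m) = b4 (t0 + (s + j) % m)
      rw [← ca_addmod s j m]
    rcases (by omega : m = 1 ∨ 2 ≤ m) with hm | hm
    · -- m = 1 : two adjacent equal letters, impossible by parity
      obtain ⟨k, hk⟩ := Phi1 0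
      have e0 : b4 k = V 0 := by simpa using hk 0 (by omega)
      have e1 : b4 (k+1) = V 1 := by simpa using hk 1 (by omega)
      have hV01 : V 1 = V 0 := by
        show b4 (t0 + 1 % m) = b4 (t0 + 0 % m)
        rw [hm]
      have heq : b4 k = b4 (k+1) := by rw [e0, e1, hV01]
      have := congrArg caPE heq
      rw [ca_pb hfix, ca_pb hfix] at this
      simp only [decide_eq_decide] at this
      omega
    · -- m ≥ 2 : apply the main 4-letter lemma
      apply ca_Gstar hfix m hm V hVper
      · intro s
        obtain ⟨k, hk⟩ := Phi1 s
        exact ⟨k, fun j hj => (hk j (by omega)).symm⟩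
      · intro s
        obtain ⟨k, hk⟩ := Phi1 (s + (m-1))
        refine ⟨k, ?_, ?_⟩
        · have := hk 0 (by omega)
          simp only [Nat.add_zero] at this
          rw [this]
        · intro j hj
          have := hk (j+1) (by omega)
          rw [show s + (m-1) + (j+1) = (s + j) + m by omega, hVper] at this
          rw [show k + 1 + j = k + (j+1) by omega]
          exact this.symm
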